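/- Let n ≥ 1 be an integer, let q ∈ ℂ be nonzero and not a root of unity, and let λ be a Young diagram satisfying λ'_1 + λ'_2 ≤ 2n + 1. Then Q_λ(−q^{2n}, q) ≠ 0. -/
import Mathlib

open scoped BigOperators

/-- The cells of a Young diagram in the paper's 1-indexed coordinates. -/
def pcells (μ : YoungDiagram) : Finset (ℕ × ℕ) :=
  μ.cells.image (fun p => (p.1 + 1, p.2 + 1))

/-- `prow μ i` is λ_i, the number of cells in the i-th row (1-indexed). -/
def prow (μ : YoungDiagram) (i : ℕ) : ℕ := μ.rowLen (i - 1)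

/-- `pcol μ j` is λ'_j, the number of cells in the j-th column (1-indexed). -/
def pcol (μ : YoungDiagram) (j : ℕ) : ℕ := μ.colLen (j - 1)

/-- The hook length h(i,j) = λ_i − i + λ'_j − j + 1 of a cell (1-indexed). -/
def hookP (μ : YoungDiagram) (i j : ℕ) : ℤ :=
  (prow μ i : ℤ) - i + (pcol μ j : ℤ) - j + 1

/-- The quantity d(i,j) of the paper (1-indexed cells). -/
def dP (μ : YoungDiagram) (i j : ℕ) : ℤ :=
  if i ≤ j then (prow μ i : ℤ) + (prow μ j : ℤ) - i - j + 1
  else -(pcol μ i : ℤ) - (pcol μ j : ℤ) + i + j - 1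

/-- The function Q_λ(r,q) of Wenzl, as in the paper. -/
noncomputable def Qpoly (μ : YoungDiagram) (r q : ℂ) : ℂ :=
  (∏ p ∈ (pcells μ).filter (fun p => p.1 = p.2),
      (r * q ^ ((prow μ p.2 : ℤ) - (pcol μ p.2 : ℤ))
        - r⁻¹ * q ^ (-(prow μ p.2 : ℤ) + (pcol μ p.2 : ℤ))
        + q ^ ((prow μ p.2 : ℤ) + (pcol μ p.2 : ℤ) - 2 * (p.2 : ℤ) + 1)
        - q ^ (-(prow μ p.2 : ℤ) - (pcol μ p.2 : ℤ) + 2 * (p.2 : ℤ) - 1))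
      / (q ^ hookP μ p.1 p.2 - q ^ (-hookP μ p.1 p.2)))
  *
  (∏ p ∈ (pcells μ).filter (fun p => p.1 ≠ p.2),
      (r * q ^ dP μ p.1 p.2 - r⁻¹ * q ^ (-dP μ p.1 p.2))
      / (q ^ hookP μ p.1 p.2 - q ^ (-hookP μ p.1 p.2)))

section aux
variable {q : ℂ}

lemma zpow_ne_one' (hq0 : q ≠ 0) (hq : ∀ m : ℕ, 1 ≤ m → q ^ m ≠ 1)
    {k : ℤ} (hk : k ≠ 0) : q ^ k ≠ 1 := by
  have base : ∀ k : ℤ, 0 < k → q ^ k ≠ 1 := by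
    intro k hkpos
    have h := hq k.toNat (by omega)
    rwa [← zpow_natCast q k.toNat, Int.toNat_of_nonneg (by omega)] at h
  rcases lt_or_gt_of_ne hk with h | h
  · intro hc
    have : q ^ (-k) = 1 := by rw [zpow_neg, hc, inv_one]
    exact base (-k) (by omega) this
  · exact base k h

lemma zpow_ne_zpow' (hq0 : q ≠ 0) (hq : ∀ m : ℕ, 1 ≤ m → q ^ m ≠ 1)
    {a b : ℤ} (hab : a ≠ b) : q ^ a ≠ q ^ b := by
  intro h
  have : q ^ (a - b) = 1 := by
    rw [zpow_sub₀ hq0, h, div_self (zpow_ne_zero _ hq0)]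
  exact zpow_ne_one' hq0 hq (by omega) this

lemma zpow_ne_neg_one' (hq0 : q ≠ 0) (hq : ∀ m : ℕ, 1 ≤ m → q ^ m ≠ 1)
    (c : ℤ) : q ^ c ≠ -1 := by
  rcases eq_or_ne c 0 with rfl | hc
  · norm_num
  · intro h
    have : q ^ (2 * c) = 1 := by
      rw [two_mul, zpow_add₀ hq0, h]; ring
    exact zpow_ne_one' hq0 hq (by omega) this

lemma offdiag_key (hq0 : q ≠ 0) (hq : ∀ m : ℕ, 1 ≤ m → q ^ m ≠ 1)
    (N d : ℤ) (h : N + d ≠ 0) :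
    (-(q ^ N)) * q ^ d - (-(q ^ N))⁻¹ * q ^ (-d) ≠ 0 := by
  have e1 : (-(q ^ N)) * q ^ d = -(q ^ (N + d)) := by
    rw [zpow_add₀ hq0]; ring
  have e2 : (-(q ^ N))⁻¹ * q ^ (-d) = -(q ^ (-(N + d))) := by
    rw [inv_neg, ← zpow_neg, neg_add, zpow_add₀ hq0]; ring
  rw [e1, e2]
  intro hc
  exact zpow_ne_zpow' hq0 hq (a := -(N+d)) (b := N + d) (by omega)
    (by linear_combination hc)

lemma diag_key (hq0 : q ≠ 0) (hq : ∀ m : ℕ, 1 ≤ m → q ^ m ≠ 1)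
    (N x A : ℤ) (hAB : A ≠ N + x) :
    (-(q ^ N)) * q ^ x - (-(q ^ N))⁻¹ * q ^ (-x) + q ^ A - q ^ (-A) ≠ 0 := by
  set B := N + x with hB
  have e1 : (-(q ^ N)) * q ^ x = -(q ^ B) := by rw [hB, zpow_add₀ hq0]; ring
  have e2 : (-(q ^ N))⁻¹ * q ^ (-x) = -(q ^ (-B)) := by
    rw [inv_neg, ← zpow_neg, hB, neg_add, zpow_add₀ hq0]; ring
  have key : (-(q ^ N)) * q ^ x - (-(q ^ N))⁻¹ * q ^ (-x) + q ^ A - q ^ (-A)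
      = (q ^ A - q ^ B) * (1 + q ^ (-A - B)) := by
    have h1 : q ^ A * q ^ (-A - B) = q ^ (-B) := by
      rw [← zpow_add₀ hq0]; ring_nf
    have h2 : q ^ B * q ^ (-A - B) = q ^ (-A) := by
      rw [← zpow_add₀ hq0]; ring_nf
    rw [e1, e2]; linear_combination h2 - h1
  rw [key]
  apply mul_ne_zero
  · exact sub_ne_zero.mpr (zpow_ne_zpow' hq0 hq hAB)
  · intro hc
    exact zpow_ne_neg_one' hq0 hq (-A - B) (by linear_combination hc)

end aux

lemma diag_key' {q : ℂ} (hq0 : q ≠ 0) (hq : ∀ m : ℕ, 1 ≤ m → q ^ m ≠ 1)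
    (N x x' A A' : ℤ) (hx : x' = -x) (hA : A' = -A) (hAB : A ≠ N + x) :
    (-(q ^ N)) * q ^ x - (-(q ^ N))⁻¹ * q ^ x' + q ^ A - q ^ A' ≠ 0 := by
  subst hx hA
  exact diag_key hq0 hq N x A hAB

theorem stmt1 (n : ℕ) (hn : 1 ≤ n) (q : ℂ) (hq0 : q ≠ 0)
    (hq : ∀ m : ℕ, 1 ≤ m → q ^ m ≠ 1) (μ : YoungDiagram)
    (hcols : pcol μ 1 + pcol μ 2 ≤ 2 * n + 1) :
    Qpoly μ (-(q ^ (2 * n))) q ≠ 0 := by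
  have hr : (-(q ^ (2 * n))) = -(q ^ ((2 * n : ℕ) : ℤ)) := by
    rw [zpow_natCast]
  have hden : ∀ p ∈ pcells μ, q ^ hookP μ p.1 p.2 - q ^ (-hookP μ p.1 p.2) ≠ 0 := by
    rintro ⟨i, j⟩ hp
    obtain ⟨⟨a, b⟩, hab, hEq⟩ := Finset.mem_image.mp hp
    obtain ⟨hi, hj⟩ : i = a + 1 ∧ j = b + 1 := by
      simpa [Prod.ext_iff] using hEq.symm
    subst hi; subst hj
    have hb : b < μ.rowLen a := YoungDiagram.mem_iff_lt_rowLen.mp hab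
    have ha : a < μ.colLen b := YoungDiagram.mem_iff_lt_colLen.mp hab
    have hhook : 1 ≤ hookP μ (a + 1) (b + 1) := by
      simp only [hookP, prow, pcol, Nat.add_sub_cancel]
      push_cast; omega
    refine sub_ne_zero.mpr (zpow_ne_zpow' hq0 hq ?_)
    show hookP μ (a + 1) (b + 1) ≠ -(hookP μ (a + 1) (b + 1))
    omega
  unfold Qpoly
  apply mul_ne_zero
  · rw [Finset.prod_ne_zero_iff]
    rintro ⟨i, j⟩ hp
    rw [Finset.mem_filter] at hp
    obtain ⟨hp, hij⟩ := hp
    apply div_ne_zero _ (hden _ hp)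
    obtain ⟨⟨a, b⟩, hab, hEq⟩ := Finset.mem_image.mp hp
    obtain ⟨hi, hj⟩ : i = a + 1 ∧ j = b + 1 := by
      simpa [Prod.ext_iff] using hEq.symm
    subst hi; subst hj
    simp only at hij
    have hba : b = a := by omega
    subst hba
    have hb : b < μ.rowLen b := YoungDiagram.mem_iff_lt_rowLen.mp hab
    have ha : b < μ.colLen b := YoungDiagram.mem_iff_lt_colLen.mp hab
    rw [hr]
    refine diag_key' hq0 hq _ _ _ _ _ (by ring) (by ring) ?_
    simp only [prow, pcol, Nat.add_sub_cancel]
    push_cast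
    omega
  · rw [Finset.prod_ne_zero_iff]
    rintro ⟨i, j⟩ hp
    rw [Finset.mem_filter] at hp
    obtain ⟨hp, hij⟩ := hp
    apply div_ne_zero _ (hden _ hp)
    obtain ⟨⟨a, b⟩, hab, hEq⟩ := Finset.mem_image.mp hp
    obtain ⟨hi, hj⟩ : i = a + 1 ∧ j = b + 1 := by
      simpa [Prod.ext_iff] using hEq.symm
    subst hi; subst hj
    simp only at hij
    have hab' : a ≠ b := by omega
    have hb : b < μ.rowLen a := YoungDiagram.mem_iff_lt_rowLen.mp hab
    have ha : a < μ.colLen b := YoungDiagram.mem_iff_lt_colLen.mp hab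
    rw [hr]
    apply offdiag_key hq0 hq
    rcases lt_or_gt_of_ne hab' with h | h
    · have hd : dP μ (a + 1) (b + 1)
          = (μ.rowLen a : ℤ) + (μ.rowLen b : ℤ) - (a + 1) - (b + 1) + 1 := by
        simp only [dP, prow, Nat.add_sub_cancel, if_pos (by omega : a + 1 ≤ b + 1)]
        push_cast; ring
      have hc1 : μ.colLen b ≤ μ.colLen 1 := μ.colLen_anti 1 b (by omega)
      have hc0 : μ.colLen 1 ≤ μ.colLen 0 := μ.colLen_anti 0 1 (by omega)
      have hcols' : μ.colLen 0 + μ.colLen 1 ≤ 2 * n + 1 := by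
        simpa [pcol] using hcols
      rw [hd]; push_cast; omega
    · have hd : dP μ (a + 1) (b + 1)
          = -(μ.colLen a : ℤ) - (μ.colLen b : ℤ) + (a + 1) + (b + 1) - 1 := by
        simp only [dP, pcol, Nat.add_sub_cancel, if_neg (by omega : ¬ a + 1 ≤ b + 1)]
        push_cast; ring
      have hca : μ.colLen a ≤ μ.colLen 1 := μ.colLen_anti 1 a (by omega)
      have hcb : μ.colLen b ≤ μ.colLen 0 := μ.colLen_anti 0 b (by omega)
      have hcols' : μ.colLen 0 + μ.colLen 1 ≤ 2 * n + 1 := by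
        simpa [pcol] using hcols
      rw [hd]; push_cast; omega
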